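/- Let s₁, …, s_m be linearly independent vectors in a real vector space of symmetric bilinear forms on a finite-dimensional real vector space E, and suppose s₁ is positive-definite. Then there exist linearly independent positive-definite symmetric bilinear forms b₁, …, b_m with span(b₁,…,b_m) = span(s₁,…,s_m). -/

import Mathlib

/-- If `s 0, …, s (m-1)` are linearly independent symmetric bilinear
forms on a finite-dimensional real vector space `E` and `s 0` is positive-definite,
then there are linearly independent positive-definite symmetric bilinear forms
`b 0, …, b (m-1)` with the same span. -/
theorem stmt_2 {E : Type*} [AddCommGroup E] [Module ℝ E] [FiniteDimensional ℝ E]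
    {m : ℕ} (hm : 0 < m)
    (s : Fin m → (E →ₗ[ℝ] E →ₗ[ℝ] ℝ))
    (hind : LinearIndependent ℝ s)
    (hsymm : ∀ i, ∀ v w : E, s i v w = s i w v)
    (hpos : ∀ v : E, v ≠ 0 → 0 < s ⟨0, hm⟩ v v) :
    ∃ b : Fin m → (E →ₗ[ℝ] E →ₗ[ℝ] ℝ),
      LinearIndependent ℝ b ∧
      (∀ i, ∀ v w : E, b i v w = b i w v) ∧
      (∀ i, ∀ v : E, v ≠ 0 → 0 < b i v v) ∧
      Submodule.span ℝ (Set.range b) = Submodule.span ℝ (Set.range s) := by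
  set i0 : Fin m := ⟨0, hm⟩ with hi0
  -- E is nontrivial
  have hE : Nontrivial E := by
    by_contra h
    rw [not_nontrivial_iff_subsingleton] at h
    have : s i0 = 0 := by
      ext v w
      have : v = 0 := Subsingleton.elim v 0
      simp [this]
    exact hind.ne_zero i0 this
  set n := Module.finrank ℝ E with hn
  set B := Module.finBasis ℝ E with hB
  set e := B.equivFun with he
  set f : Fin m → (Fin n → ℝ) → ℝ := fun i x => s i (e.symm x) (e.symm x) with hf
  have hcont : ∀ i, Continuous (f i) := by
    intro i
    have hfe : f i = fun x => ∑ j, ∑ k, x j * x k * s i (B k) (B j) := by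
      funext x
      have hsx : e.symm x = ∑ j, x j • B j := B.equivFun_symm_apply x
      simp only [hf, hsx, map_sum, map_smul, LinearMap.sum_apply, LinearMap.smul_apply,
        smul_eq_mul, Finset.mul_sum]
      exact Finset.sum_congr rfl fun j _ => Finset.sum_congr rfl fun k _ => by ring
    rw [hfe]
    exact continuous_finset_sum _ fun j _ => continuous_finset_sum _ fun k _ =>
      (((continuous_apply j).mul (continuous_apply k)).mul continuous_const)
  have hscale : ∀ i (t : ℝ) x, f i (t • x) = t ^ 2 * f i x := by
    intro i t x
    simp only [hf, map_smul, LinearMap.smul_apply, smul_eq_mul]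
    ring
  have hNT : Nontrivial (Fin n → ℝ) := e.toEquiv.symm.nontrivial
  set S := Metric.sphere (0 : Fin n → ℝ) 1 with hS
  have hSc : IsCompact S := isCompact_sphere _ _
  have hSne : S.Nonempty := NormedSpace.sphere_nonempty.mpr zero_le_one
  have hmemne : ∀ x ∈ S, e.symm x ≠ 0 := by
    intro x hx h0
    have hx0 : x = 0 := by
      have := e.symm.injective (h0.trans (e.symm.map_zero).symm)
      exact this
    rw [hx0] at hx
    simp [hS] at hx
  obtain ⟨x0, hx0S, hx0min⟩ := hSc.exists_isMinOn hSne (hcont i0).continuousOn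
  set ε := f i0 x0 with hε
  have hεpos : 0 < ε := hpos _ (hmemne x0 hx0S)
  have hCex : ∀ i, ∃ C, ∀ x ∈ S, |f i x| ≤ C := by
    intro i
    obtain ⟨C, hC⟩ := hSc.exists_bound_of_continuousOn (hcont i).continuousOn
    exact ⟨C, fun x hx => by simpa [Real.norm_eq_abs] using hC x hx⟩
  choose C hCb using hCex
  have hCnn : ∀ i, 0 ≤ C i := fun i => le_trans (abs_nonneg _) (hCb i x0 hx0S)
  set c : Fin m → ℝ := fun i => if i = i0 then 0 else C i / ε + 1 with hc
  have hcnn : ∀ i, 0 ≤ c i := by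
    intro i
    by_cases h : i = i0
    · simp [hc, h]
    · simp only [hc, if_neg h]
      exact add_nonneg (div_nonneg (hCnn i) hεpos.le) zero_le_one
  set b : Fin m → (E →ₗ[ℝ] E →ₗ[ℝ] ℝ) := fun i => s i + c i • s i0 with hb
  have hb0 : b i0 = s i0 := by simp [hb, hc]
  -- positivity
  have hbpos : ∀ i, ∀ v : E, v ≠ 0 → 0 < b i v v := by
    intro i v hv
    have hbv : b i v v = s i v v + c i * s i0 v v := by
      simp [hb, LinearMap.add_apply, LinearMap.smul_apply, smul_eq_mul]
    rw [hbv]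
    by_cases h : i = i0
    · subst h
      simp only [hc, if_pos rfl]
      simpa using hpos v hv
    · set x := e v with hx
      have hxne : x ≠ 0 := fun h0 => hv (by
        rw [hx] at h0
        simpa using congrArg e.symm h0)
      have ht : (0:ℝ) < ‖x‖ := norm_pos_iff.mpr hxne
      set u := ‖x‖⁻¹ • x with hu
      have huS : u ∈ S := by
        simp [hu, hS, norm_smul, abs_of_pos (inv_pos.mpr ht), inv_mul_cancel₀ ht.ne']
      obtain ⟨t, ht', hxu⟩ : ∃ t : ℝ, 0 < t ∧ x = t • u := by
        exact ⟨‖x‖, ht, by rw [hu, smul_smul, mul_inv_cancel₀ ht.ne', one_smul]⟩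
      have hfi : ∀ j, s j v v = f j x := by
        intro j
        simp [hf, hx]
      have h1 : f i u + c i * f i0 u > 0 := by
        have hlb : -(C i) ≤ f i u := neg_le_of_abs_le (hCb i u huS)
        have hlb0 : ε ≤ f i0 u := hx0min huS
        have hci : c i = C i / ε + 1 := by simp [hc, h]
        have hce : c i * ε = C i + ε := by
          rw [hci, add_mul, div_mul_cancel₀ _ hεpos.ne', one_mul]
        have hmul : c i * ε ≤ c i * f i0 u := mul_le_mul_of_nonneg_left hlb0 (hcnn i)
        linarith
      have h2a : f i x = t ^ 2 * f i u := by rw [hxu, hscale]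
      have h2b : f i0 x = t ^ 2 * f i0 u := by rw [hxu, hscale]
      rw [hfi i, hfi i0, h2a, h2b]
      have hre : t ^ 2 * f i u + c i * (t ^ 2 * f i0 u)
          = t ^ 2 * (f i u + c i * f i0 u) := by ring
      rw [hre]
      exact mul_pos (pow_pos ht' 2) h1
  -- span equality
  have hspan : Submodule.span ℝ (Set.range b) = Submodule.span ℝ (Set.range s) := by
    apply le_antisymm
    · rw [Submodule.span_le]
      rintro _ ⟨i, rfl⟩
      exact Submodule.add_mem _ (Submodule.subset_span ⟨i, rfl⟩)
        (Submodule.smul_mem _ _ (Submodule.subset_span ⟨i0, rfl⟩))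
    · rw [Submodule.span_le]
      rintro _ ⟨i, rfl⟩
      have : s i = b i - c i • b i0 := by
        rw [hb0]; simp [hb]; abel
      rw [this]
      exact Submodule.sub_mem (Submodule.span ℝ (Set.range b)) (Submodule.subset_span ⟨i, rfl⟩)
        (Submodule.smul_mem (Submodule.span ℝ (Set.range b)) _ (Submodule.subset_span ⟨i0, rfl⟩))
  -- linear independence
  have hbind : LinearIndependent ℝ b := by
    rw [linearIndependent_iff_card_eq_finrank_span] at hind ⊢
    rw [hind]
    unfold Set.finrank
    rw [hspan]
  exact ⟨b, hbind, fun i v w => by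
    simp only [hb, LinearMap.add_apply, LinearMap.smul_apply, smul_eq_mul, hsymm], hbpos, hspan⟩
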